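/- Let (X_{nk}) be a d-dimensional martingale difference array satisfying (CLB₁^d). Then for every a > 0, max_{1≤k≤k_n} ‖X_{nk}(a)‖ → 0 in probability as n → ∞, where X_{nk}(a) = X_{nk} 1_{{‖X_{nk}‖ ≤ a}} − E(X_{nk} 1_{{‖X_{nk}‖ ≤ a}} | F_{n,k-1}). -/

import Mathlib

open MeasureTheory Filter


section Aux

variable {Ω : Type*} {m m0 : MeasurableSpace Ω} {μ : Measure Ω}

theorem condexp_clm_comm' (hm : m ≤ m0) [IsFiniteMeasure μ]
    {E F : Type*} [NormedAddCommGroup E] [NormedSpace ℝ E] [CompleteSpace E]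
    [NormedAddCommGroup F] [NormedSpace ℝ F] [CompleteSpace F]
    (L : E →L[ℝ] F) {f : Ω → E} (hf : Integrable f μ) :
    (fun ω => L ((μ[f|m]) ω)) =ᵐ[μ] μ[fun ω => L (f ω)|m] := by
  refine ae_eq_condExp_of_forall_setIntegral_eq hm (L.integrable_comp hf)
    (fun s _ _ => (L.integrable_comp integrable_condExp).integrableOn)
    (fun s hs hμs => ?_) ?_
  · rw [L.integral_comp_comm integrable_condExp.integrableOn,
      setIntegral_condExp hm hf hs, ← L.integral_comp_comm hf.integrableOn]
  · exact (L.continuous.comp_stronglyMeasurable stronglyMeasurable_condExp).aestronglyMeasurable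

theorem abs_condexp_le_condexp_abs' {g : Ω → ℝ} (hg : Integrable g μ) :
    ∀ᵐ ω ∂μ, |(μ[g|m]) ω| ≤ (μ[fun ω => ‖g ω‖|m]) ω := by
  have h1 : μ[g|m] ≤ᵐ[μ] μ[fun ω => ‖g ω‖|m] :=
    condExp_mono hg hg.norm (ae_of_all _ fun ω => by
      simpa [Real.norm_eq_abs] using le_abs_self (g ω))
  have h2 : μ[-g|m] ≤ᵐ[μ] μ[fun ω => ‖g ω‖|m] :=
    condExp_mono hg.neg hg.norm (ae_of_all _ fun ω => by
      simpa [Real.norm_eq_abs] using neg_le_abs (g ω))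
  have h3 := condExp_neg (μ := μ) (m := m) g
  filter_upwards [h1, h2, h3] with ω h1 h2 h3
  rw [abs_le]
  refine ⟨?_, h1⟩
  have : (-(μ[g|m])) ω ≤ (μ[fun ω => ‖g ω‖|m]) ω := h3 ▸ h2
  simpa using neg_le.mp (by simpa using this)

theorem norm_le_sum_abs' {d : ℕ} (v : EuclideanSpace ℝ (Fin d)) :
    ‖v‖ ≤ ∑ i, |v i| := by
  rw [EuclideanSpace.norm_eq]
  refine le_trans (Real.sqrt_le_sqrt ?_) (le_of_eq (Real.sqrt_sq (by positivity)))
  rw [sq, Finset.sum_mul]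
  refine Finset.sum_le_sum fun i _ => ?_
  calc ‖v i‖ ^ 2 = |v i| * |v i| := by rw [Real.norm_eq_abs, sq]
    _ ≤ |v i| * ∑ j, |v j| :=
        mul_le_mul_of_nonneg_left
          (Finset.single_le_sum (f := fun j => |v j|) (fun j _ => abs_nonneg _) (Finset.mem_univ i)) (abs_nonneg _)

theorem abs_coord_le_norm' {d : ℕ} (v : EuclideanSpace ℝ (Fin d)) (i : Fin d) :
    |v i| ≤ ‖v‖ := by
  rw [EuclideanSpace.norm_eq, ← Real.sqrt_sq_eq_abs]
  refine Real.sqrt_le_sqrt ?_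
  calc (v i)^2 = ‖v i‖^2 := by rw [Real.norm_eq_abs, sq_abs]
    _ ≤ ∑ j, ‖v j‖^2 := Finset.single_le_sum (f := fun j => ‖v j‖^2) (fun j _ => by positivity) (Finset.mem_univ i)

theorem norm_condexp_le_sum' (hm : m ≤ m0) [IsFiniteMeasure μ] {d : ℕ}
    {f : Ω → EuclideanSpace ℝ (Fin d)} (hf : Integrable f μ) :
    ∀ᵐ ω ∂μ, ‖(μ[f|m]) ω‖ ≤ (d : ℝ) * (μ[fun ω => ‖f ω‖|m]) ω := by
  have H : ∀ᵐ ω ∂μ, ∀ i : Fin d, |(μ[f|m]) ω i| ≤ (μ[fun ω => ‖f ω‖|m]) ω := by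
    rw [ae_all_iff]
    intro i
    have hcoord : (fun ω => (EuclideanSpace.proj (𝕜 := ℝ) i) ((μ[f|m]) ω)) =ᵐ[μ]
        μ[fun ω => (EuclideanSpace.proj (𝕜 := ℝ) i) (f ω)|m] :=
      condexp_clm_comm' hm _ hf
    have habs := abs_condexp_le_condexp_abs' (m := m)
      ((EuclideanSpace.proj (𝕜 := ℝ) i).integrable_comp hf)
    have hmono : μ[fun ω => ‖(EuclideanSpace.proj (𝕜 := ℝ) i) (f ω)‖|m] ≤ᵐ[μ]
        μ[fun ω => ‖f ω‖|m] := by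
      refine condExp_mono ((EuclideanSpace.proj (𝕜 := ℝ) i).integrable_comp hf).norm hf.norm
        (ae_of_all _ fun ω => ?_)
      simpa [Real.norm_eq_abs] using abs_coord_le_norm' (f ω) i
    filter_upwards [hcoord, habs, hmono] with ω h1 h2 h3
    have : |(μ[f|m]) ω i| = |(μ[fun ω => (EuclideanSpace.proj (𝕜 := ℝ) i) (f ω)|m]) ω| := by
      rw [← h1]; rfl
    rw [this]
    exact h2.trans h3
  filter_upwards [H] with ω hω
  calc ‖(μ[f|m]) ω‖ ≤ ∑ i, |(μ[f|m]) ω i| := norm_le_sum_abs' _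
    _ ≤ ∑ _i : Fin d, (μ[fun ω => ‖f ω‖|m]) ω := Finset.sum_le_sum fun i _ => hω i
    _ = (d : ℝ) * (μ[fun ω => ‖f ω‖|m]) ω := by
        simp [Finset.sum_const, nsmul_eq_mul]

end Aux


theorem lenglart_aux' {Ω : Type*} {m0 : MeasurableSpace Ω} (μ : Measure Ω) [IsProbabilityMeasure μ]
    (m : ℕ) (F : ℕ → MeasurableSpace Ω) (hFmono : Monotone F) (hFle : ∀ k, F k ≤ m0)
    (Y : ℕ → Ω → ℝ) (hYnn : ∀ k ω, 0 ≤ Y k ω) (hYint : ∀ k, Integrable (Y k) μ)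
    {δ ε' : ℝ} (hδ : 0 < δ) (hε' : 0 < ε') :
    μ {ω | ε' ≤ ∑ k ∈ Finset.Icc 1 m, Y k ω} ≤
      ENNReal.ofReal (δ / ε') +
        μ {ω | δ ≤ |∑ k ∈ Finset.Icc 1 m, (μ[Y k | F (k - 1)]) ω|} := by
  classical
  set Z : ℕ → Ω → ℝ := fun k => μ[Y k | F (k - 1)] with hZdef
  set A : ℕ → Ω → ℝ := fun j ω => ∑ k ∈ Finset.Icc 1 j, Z k ω with hAdef
  set G : ℕ → Set Ω := fun k => {ω | A k ω ≤ δ} with hGdef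
  have hGmeas : ∀ k, MeasurableSet[F (k - 1)] (G k) := by
    intro k
    have hA : StronglyMeasurable[F (k - 1)] (A k) := by
      refine Finset.stronglyMeasurable_fun_sum _ fun j hj => ?_
      exact stronglyMeasurable_condExp.mono
        (hFmono (Nat.sub_le_sub_right (Finset.mem_Icc.mp hj).2 1))
    exact measurableSet_le hA.measurable measurable_const
  have hGmeas0 : ∀ k, MeasurableSet (G k) := fun k => hFle _ _ (hGmeas k)
  set W' : Ω → ℝ := fun ω => ∑ k ∈ Finset.Icc 1 m, (G k).indicator (Y k) ω with hW'def
  set V' : Ω → ℝ := fun ω => ∑ k ∈ Finset.Icc 1 m, (G k).indicator (Z k) ω with hV'def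
  have hW'int : Integrable W' μ :=
    integrable_finset_sum _ fun k _ => (hYint k).indicator (hGmeas0 k)
  have hV'int : Integrable V' μ :=
    integrable_finset_sum _ fun k _ => integrable_condExp.indicator (hGmeas0 k)
  have hZnn : ∀ k, 0 ≤ᵐ[μ] Z k := fun k => condExp_nonneg (ae_of_all _ (hYnn k))
  have haeZ : ∀ᵐ ω ∂μ, ∀ k ∈ Finset.Icc 1 m, 0 ≤ Z k ω :=
    (ae_ball_iff (Finset.Icc 1 m).countable_toSet).mpr fun k _ => hZnn k
  have hV'le : ∀ᵐ ω ∂μ, V' ω ≤ δ := by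
    filter_upwards [haeZ] with ω hω
    have key : ∀ j, j ≤ m → ∑ k ∈ Finset.Icc 1 j, (G k).indicator (Z k) ω ≤ δ := by
      intro j
      induction j with
      | zero => intro _; simpa using hδ.le
      | succ j ih =>
        intro hjm
        by_cases hA : A (j + 1) ω ≤ δ
        · refine le_trans (Finset.sum_le_sum fun k hk => ?_) hA
          have hknn : 0 ≤ Z k ω := hω k (Finset.mem_Icc.mpr
            ⟨(Finset.mem_Icc.mp hk).1, le_trans (Finset.mem_Icc.mp hk).2 hjm⟩)
          by_cases hmem : ω ∈ G k
          · rw [Set.indicator_of_mem hmem]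
          · rw [Set.indicator_of_notMem hmem]; exact hknn
        · rw [Finset.sum_Icc_succ_top (Nat.one_le_iff_ne_zero.mpr (Nat.succ_ne_zero j)),
            Set.indicator_of_notMem (by exact hA), add_zero]
          exact ih (by omega)
    exact key m le_rfl
  have hIntEq : ∫ ω, W' ω ∂μ = ∫ ω, V' ω ∂μ := by
    rw [integral_finset_sum _ fun k _ => (hYint k).indicator (hGmeas0 k),
      integral_finset_sum _ fun k _ => integrable_condExp.indicator (hGmeas0 k)]
    refine Finset.sum_congr rfl fun k _ => ?_
    rw [integral_indicator (hGmeas0 k), integral_indicator (hGmeas0 k),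
      setIntegral_condExp (hFle (k - 1)) (hYint k) (hGmeas k)]
  have hV'intle : ∫ ω, V' ω ∂μ ≤ δ := by
    calc ∫ ω, V' ω ∂μ ≤ ∫ _, δ ∂μ := integral_mono_ae hV'int (integrable_const δ) hV'le
      _ = δ := by simp
  have hW'nn : 0 ≤ᵐ[μ] W' := ae_of_all _ fun ω =>
    Finset.sum_nonneg fun k _ => Set.indicator_nonneg (fun x _ => hYnn k x) _
  have hMark := mul_meas_ge_le_integral_of_nonneg hW'nn hW'int ε'
  have h4 : (μ {x | ε' ≤ W' x}).toReal ≤ δ / ε' := by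
    rw [le_div_iff₀ hε']
    rw [hIntEq] at hMark
    rw [measureReal_def] at hMark
    nlinarith [hMark, hV'intle]
  have hμW' : μ {x | ε' ≤ W' x} ≤ ENNReal.ofReal (δ / ε') := by
    rw [← ENNReal.ofReal_toReal (measure_ne_top μ {x | ε' ≤ W' x})]
    exact ENNReal.ofReal_le_ofReal h4
  have hsub : ∀ᵐ ω ∂μ, ω ∈ {ω | ε' ≤ ∑ k ∈ Finset.Icc 1 m, Y k ω} →
      ω ∈ ({x | ε' ≤ W' x} ∪ {ω | δ ≤ |A m ω|}) := by
    filter_upwards [haeZ] with ω hω hmem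
    by_cases hAm : A m ω ≤ δ
    · left
      have hG : ∀ k ∈ Finset.Icc 1 m, ω ∈ G k := by
        intro k hk
        have h1 : A k ω ≤ A m ω :=
          Finset.sum_le_sum_of_subset_of_nonneg
            (Finset.Icc_subset_Icc_right (Finset.mem_Icc.mp hk).2)
            (fun j hj _ => hω j hj)
        exact le_trans h1 hAm
      have hWW : W' ω = ∑ k ∈ Finset.Icc 1 m, Y k ω :=
        Finset.sum_congr rfl fun k hk => Set.indicator_of_mem (hG k hk) _
      simpa [Set.mem_setOf_eq, hWW] using hmem
    · right
      exact le_trans (not_le.mp hAm).le (le_abs_self _)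
  calc μ {ω | ε' ≤ ∑ k ∈ Finset.Icc 1 m, Y k ω}
      ≤ μ ({x | ε' ≤ W' x} ∪ {ω | δ ≤ |A m ω|}) := measure_mono_ae hsub
    _ ≤ μ {x | ε' ≤ W' x} + μ {ω | δ ≤ |A m ω|} := measure_union_le _ _
    _ ≤ ENNReal.ofReal (δ / ε') + μ {ω | δ ≤ |A m ω|} := add_le_add_left hμW' _

theorem condexp_trunc_bound' {Ω : Type*} {m m0 : MeasurableSpace Ω} (hm : m ≤ m0)
    (μ : Measure Ω) [IsProbabilityMeasure μ] {d : ℕ} {f : Ω → EuclideanSpace ℝ (Fin d)}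
    (hfm : StronglyMeasurable f) (hf : Integrable f μ) (hmean : μ[f|m] =ᵐ[μ] 0) (a : ℝ) :
    ∀ᵐ ω ∂μ, ‖(μ[Set.indicator {ω' | ‖f ω'‖ ≤ a} f | m]) ω‖ ≤
      ((d : ℝ) + 1) * (μ[Set.indicator {ω' | a ≤ ‖f ω'‖} (fun ω' => ‖f ω'‖) | m]) ω ∧
      0 ≤ (μ[Set.indicator {ω' | a ≤ ‖f ω'‖} (fun ω' => ‖f ω'‖) | m]) ω := by
  have hS : MeasurableSet {ω' | ‖f ω'‖ ≤ a} :=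
    measurableSet_le hfm.norm.measurable measurable_const
  have hS' : MeasurableSet {ω' | a < ‖f ω'‖} :=
    measurableSet_lt measurable_const hfm.norm.measurable
  have hS'' : MeasurableSet {ω' | a ≤ ‖f ω'‖} :=
    measurableSet_le measurable_const hfm.norm.measurable
  have hgi : Integrable (Set.indicator {ω' | ‖f ω'‖ ≤ a} f) μ := hf.indicator hS
  have hhi : Integrable (Set.indicator {ω' | a < ‖f ω'‖} f) μ := hf.indicator hS'
  have hcompl : {ω' | ‖f ω'‖ ≤ a}ᶜ = {ω' | a < ‖f ω'‖} := by
    ext ω'; simp [not_le]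
  have hsplit : Set.indicator {ω' | ‖f ω'‖ ≤ a} f
      = f - Set.indicator {ω' | a < ‖f ω'‖} f := by
    rw [← hcompl]
    exact eq_sub_of_add_eq (Set.indicator_self_add_compl {ω' | ‖f ω'‖ ≤ a} f)
  have h1 : μ[Set.indicator {ω' | ‖f ω'‖ ≤ a} f | m] =ᵐ[μ]
      μ[f|m] - μ[Set.indicator {ω' | a < ‖f ω'‖} f | m] := by
    rw [hsplit]; exact condExp_sub hf hhi m
  have h2 := norm_condexp_le_sum' hm hhi
  have h3 : μ[fun ω => ‖Set.indicator {ω' | a < ‖f ω'‖} f ω‖ | m] ≤ᵐ[μ]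
      μ[Set.indicator {ω' | a ≤ ‖f ω'‖} (fun ω' => ‖f ω'‖) | m] := by
    refine condExp_mono hhi.norm (hf.norm.indicator hS'') (ae_of_all _ fun ω => ?_)
    show ‖Set.indicator {ω' | a < ‖f ω'‖} f ω‖ ≤ _
    rw [norm_indicator_eq_indicator_norm]
    by_cases hmem : ω ∈ {ω' | a < ‖f ω'‖}
    · rw [Set.indicator_of_mem hmem, Set.indicator_of_mem (show ω ∈ {ω' | a ≤ ‖f ω'‖} from le_of_lt (show a < ‖f ω‖ from hmem))]
    · rw [Set.indicator_of_notMem hmem]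
      exact Set.indicator_nonneg (fun x _ => norm_nonneg _) _
  have h4 : (0 : Ω → ℝ) ≤ᵐ[μ] μ[Set.indicator {ω' | a ≤ ‖f ω'‖} (fun ω' => ‖f ω'‖) | m] :=
    condExp_nonneg (ae_of_all _ fun ω => Set.indicator_nonneg (fun x _ => norm_nonneg _) _)
  filter_upwards [h1, h2, h3, h4, hmean] with ω h1 h2 h3 h4 hmean
  refine ⟨?_, h4⟩
  have hnorm : ‖(μ[Set.indicator {ω' | ‖f ω'‖ ≤ a} f | m]) ω‖
      = ‖(μ[Set.indicator {ω' | a < ‖f ω'‖} f | m]) ω‖ := by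
    rw [h1]; simp [hmean]
  rw [hnorm]
  calc ‖(μ[Set.indicator {ω' | a < ‖f ω'‖} f | m]) ω‖
      ≤ (d : ℝ) * (μ[fun ω => ‖Set.indicator {ω' | a < ‖f ω'‖} f ω‖ | m]) ω := h2
    _ ≤ (d : ℝ) * (μ[Set.indicator {ω' | a ≤ ‖f ω'‖} (fun ω' => ‖f ω'‖) | m]) ω := by
        exact mul_le_mul_of_nonneg_left h3 (by positivity)
    _ ≤ ((d : ℝ) + 1) * (μ[Set.indicator {ω' | a ≤ ‖f ω'‖} (fun ω' => ‖f ω'‖) | m]) ω := by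
        have h4' : (0:ℝ) ≤ (μ[Set.indicator {ω' | a ≤ ‖f ω'‖} (fun ω' => ‖f ω'‖) | m]) ω := h4
        nlinarith [h4']

/-- For a `d`-dimensional martingale difference array satisfying the conditional
L₁-Lindeberg condition (CLB₁^d), for every `a > 0` one has
`max_{1≤k≤k_n} ‖X_{nk}(a)‖ → 0` in probability, where
`X_{nk}(a) = X_{nk} 1_{‖X_{nk}‖ ≤ a} − E(X_{nk} 1_{‖X_{nk}‖ ≤ a} | F_{n,k-1})`. -/
theorem stmt8 {Ω : Type*} {m0 : MeasurableSpace Ω} (μ : Measure Ω) [IsProbabilityMeasure μ]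
    {d : ℕ} (kn : ℕ → ℕ) (hkn : ∀ n, 1 ≤ kn n)
    (𝓕 : ℕ → ℕ → MeasurableSpace Ω)
    (hFmono : ∀ n, Monotone (𝓕 n)) (hFle : ∀ n k, 𝓕 n k ≤ m0)
    (X : ℕ → ℕ → Ω → EuclideanSpace ℝ (Fin d))
    (hadapted : ∀ n k, StronglyMeasurable[𝓕 n k] (X n k))
    (hint : ∀ n k, Integrable (X n k) μ)
    (hmds : ∀ n k, k ∈ Finset.Icc 1 (kn n) → μ[X n k | 𝓕 n (k - 1)] =ᵐ[μ] 0)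
    (hCLB1 : ∀ ε > (0 : ℝ), TendstoInMeasure μ
      (fun n ω => ∑ k ∈ Finset.Icc 1 (kn n),
        (μ[Set.indicator {ω'' | ε ≤ ‖X n k ω''‖} (fun ω'' => ‖X n k ω''‖) | 𝓕 n (k - 1)]) ω)
      atTop (fun _ => 0)) :
    ∀ a > (0 : ℝ), TendstoInMeasure μ
      (fun n ω => (Finset.Icc 1 (kn n)).sup' (Finset.nonempty_Icc.mpr (hkn n))
        (fun k => ‖Set.indicator {ω'' | ‖X n k ω''‖ ≤ a} (X n k) ω
          - (μ[Set.indicator {ω'' | ‖X n k ω''‖ ≤ a} (X n k) | 𝓕 n (k - 1)]) ω‖))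
      atTop (fun _ => 0) := by
  intro a ha
  rw [tendstoInMeasure_iff_dist]
  intro ε hε
  classical
  set ε' : ℝ := ε / 2 with hε'def
  have hε' : 0 < ε' := by positivity
  set c : ℝ := (d : ℝ) + 1 with hcdef
  have hc : 0 < c := by positivity
  set M : ℕ → Ω → ℝ := fun n ω => (Finset.Icc 1 (kn n)).sup' (Finset.nonempty_Icc.mpr (hkn n))
      (fun k => ‖Set.indicator {ω'' | ‖X n k ω''‖ ≤ a} (X n k) ω
        - (μ[Set.indicator {ω'' | ‖X n k ω''‖ ≤ a} (X n k) | 𝓕 n (k - 1)]) ω‖) with hMdef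
  set Y : ℕ → ℕ → Ω → ℝ := fun n k =>
    Set.indicator {ω'' | ε' ≤ ‖X n k ω''‖} (fun ω'' => ‖X n k ω''‖) with hYdef
  set T : ℕ → ℕ → Ω → ℝ := fun n k =>
    μ[Set.indicator {ω'' | a ≤ ‖X n k ω''‖} (fun ω'' => ‖X n k ω''‖) | 𝓕 n (k - 1)] with hTdef
  have hXm : ∀ n k, StronglyMeasurable (X n k) := fun n k => (hadapted n k).mono (hFle n k)
  have hYnn : ∀ n k ω, 0 ≤ Y n k ω := fun n k ω =>
    Set.indicator_nonneg (fun x _ => norm_nonneg _) _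
  have hYint : ∀ n k, Integrable (Y n k) μ := fun n k =>
    (hint n k).norm.indicator (measurableSet_le measurable_const (hXm n k).norm.measurable)
  rw [ENNReal.tendsto_atTop_zero]
  intro b hb
  have hb3 : 0 < b / 3 := by
    rw [pos_iff_ne_zero]
    simp [ENNReal.div_eq_zero_iff, hb.ne']
  obtain ⟨r, hr0, hrb⟩ : ∃ r : ℝ, 0 < r ∧ ENNReal.ofReal r ≤ b / 3 := by
    rcases eq_or_ne (b / 3) ⊤ with h | h
    · exact ⟨1, one_pos, by simp [h]⟩
    · exact ⟨(b / 3).toReal, ENNReal.toReal_pos hb3.ne' h, by rw [ENNReal.ofReal_toReal h]⟩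
  set δ : ℝ := r * ε' with hδdef
  have hδ : 0 < δ := by positivity
  have hδε' : ENNReal.ofReal (δ / ε') ≤ b / 3 := by
    rw [hδdef, mul_div_assoc, div_self hε'.ne', mul_one]
    exact hrb
  -- the two vanishing CLB terms
  have hA := (tendstoInMeasure_iff_dist.mp (hCLB1 ε' hε')) δ hδ
  simp only [Real.dist_0_eq_abs] at hA
  obtain ⟨N1, hN1⟩ := ENNReal.tendsto_atTop_zero.mp hA (b / 3) hb3
  have hT := (tendstoInMeasure_iff_dist.mp (hCLB1 a ha)) (ε' / c) (by positivity)
  simp only [Real.dist_0_eq_abs] at hT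
  obtain ⟨N2, hN2⟩ := ENNReal.tendsto_atTop_zero.mp hT (b / 3) hb3
  refine ⟨max N1 N2, fun n hn => ?_⟩
  -- a.e. bound on the conditional expectation terms
  have hbound : ∀ᵐ ω ∂μ, ∀ k ∈ Finset.Icc 1 (kn n),
      ‖(μ[Set.indicator {ω'' | ‖X n k ω''‖ ≤ a} (X n k) | 𝓕 n (k - 1)]) ω‖ ≤ c * T n k ω ∧
      0 ≤ T n k ω :=
    (ae_ball_iff (Finset.Icc 1 (kn n)).countable_toSet).mpr fun k hk =>
      condexp_trunc_bound' (hFle n (k - 1)) μ (hXm n k) (hint n k)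
        (hmds n k (Finset.mem_coe.mp hk)) a
  have hMle : ∀ᵐ ω ∂μ, M n ω ≤
      (Finset.Icc 1 (kn n)).sup' (Finset.nonempty_Icc.mpr (hkn n))
        (fun k => ‖Set.indicator {ω'' | ‖X n k ω''‖ ≤ a} (X n k) ω‖)
      + c * ∑ k ∈ Finset.Icc 1 (kn n), T n k ω := by
    filter_upwards [hbound] with ω hbω
    rw [hMdef]
    refine Finset.sup'_le _ _ fun k hk => ?_
    calc ‖Set.indicator {ω'' | ‖X n k ω''‖ ≤ a} (X n k) ω
          - (μ[Set.indicator {ω'' | ‖X n k ω''‖ ≤ a} (X n k) | 𝓕 n (k - 1)]) ω‖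
        ≤ ‖Set.indicator {ω'' | ‖X n k ω''‖ ≤ a} (X n k) ω‖
          + ‖(μ[Set.indicator {ω'' | ‖X n k ω''‖ ≤ a} (X n k) | 𝓕 n (k - 1)]) ω‖ :=
          norm_sub_le _ _
      _ ≤ (Finset.Icc 1 (kn n)).sup' (Finset.nonempty_Icc.mpr (hkn n))
            (fun k => ‖Set.indicator {ω'' | ‖X n k ω''‖ ≤ a} (X n k) ω‖) + c * T n k ω :=
          add_le_add
            (Finset.le_sup'
              (fun k => ‖Set.indicator {ω'' | ‖X n k ω''‖ ≤ a} (X n k) ω‖) hk)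
            (hbω k hk).1
      _ ≤ _ := by
          refine add_le_add_right (mul_le_mul_of_nonneg_left ?_ hc.le) _
          exact Finset.single_le_sum (fun j hj => (hbω j hj).2) hk
  -- inclusion of events
  have hsub2 : ∀ᵐ ω ∂μ, ω ∈ {x | ε ≤ M n x} →
      ω ∈ ({x | ε' ≤ ∑ k ∈ Finset.Icc 1 (kn n), Y n k x}
        ∪ {x | ε' / c ≤ |∑ k ∈ Finset.Icc 1 (kn n), T n k x|}) := by
    filter_upwards [hMle] with ω hMω hmem
    by_cases hP : ε' ≤ (Finset.Icc 1 (kn n)).sup' (Finset.nonempty_Icc.mpr (hkn n))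
        (fun k => ‖Set.indicator {ω'' | ‖X n k ω''‖ ≤ a} (X n k) ω‖)
    · left
      obtain ⟨k, hk, hkge⟩ := (Finset.le_sup'_iff _).mp hP
      have hmem' : ω ∈ {ω'' | ‖X n k ω''‖ ≤ a} := by
        by_contra hcon
        rw [Set.indicator_of_notMem hcon] at hkge
        simp at hkge
        linarith
      rw [Set.indicator_of_mem hmem'] at hkge
      have hYk : ε' ≤ Y n k ω := by
        show ε' ≤ Set.indicator {ω'' | ε' ≤ ‖X n k ω''‖} (fun ω'' => ‖X n k ω''‖) ω
        rw [Set.indicator_of_mem (show ω ∈ {ω'' | ε' ≤ ‖X n k ω''‖} from hkge)]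
        exact hkge
      exact le_trans hYk (Finset.single_le_sum (fun j _ => hYnn n j ω) hk)
    · right
      have hmem2 : ε ≤ M n ω := hmem
      have hcS : ε' ≤ c * ∑ k ∈ Finset.Icc 1 (kn n), T n k ω := by
        have h1 := not_le.mp hP
        have : ε = ε' + ε' := by rw [hε'def]; ring
        linarith [hMω]
      have : ε' / c ≤ ∑ k ∈ Finset.Icc 1 (kn n), T n k ω := by
        rw [div_le_iff₀ hc]
        linarith [mul_comm c (∑ k ∈ Finset.Icc 1 (kn n), T n k ω)]
      exact le_trans this (le_abs_self _)
  -- assemble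
  have hMnn : ∀ x, 0 ≤ M n x := by
    intro x
    rw [hMdef]
    exact le_trans (norm_nonneg _)
      (Finset.le_sup'
        (fun k => ‖Set.indicator {ω'' | ‖X n k ω''‖ ≤ a} (X n k) x
          - (μ[Set.indicator {ω'' | ‖X n k ω''‖ ≤ a} (X n k) | 𝓕 n (k - 1)]) x‖)
        (Finset.mem_Icc.mpr ⟨le_rfl, hkn n⟩))
  have hgoalset : {x | ε ≤ dist (M n x) 0} = {x | ε ≤ M n x} := by
    ext x
    simp [Real.dist_0_eq_abs, abs_of_nonneg (hMnn x)]
  show μ {x | ε ≤ dist (M n x) 0} ≤ b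
  calc μ {x | ε ≤ dist (M n x) 0}
      = μ {x | ε ≤ M n x} := by rw [hgoalset]
    _ ≤ μ ({x | ε' ≤ ∑ k ∈ Finset.Icc 1 (kn n), Y n k x}
        ∪ {x | ε' / c ≤ |∑ k ∈ Finset.Icc 1 (kn n), T n k x|}) := measure_mono_ae hsub2
    _ ≤ μ {x | ε' ≤ ∑ k ∈ Finset.Icc 1 (kn n), Y n k x}
        + μ {x | ε' / c ≤ |∑ k ∈ Finset.Icc 1 (kn n), T n k x|} := measure_union_le _ _
    _ ≤ (ENNReal.ofReal (δ / ε')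
          + μ {x | δ ≤ |∑ k ∈ Finset.Icc 1 (kn n), (μ[Y n k | 𝓕 n (k - 1)]) x|})
        + μ {x | ε' / c ≤ |∑ k ∈ Finset.Icc 1 (kn n), T n k x|} :=
        add_le_add_left
          (lenglart_aux' μ (kn n) (𝓕 n) (hFmono n) (hFle n) (Y n) (hYnn n) (hYint n) hδ hε') _
    _ ≤ (b / 3 + b / 3) + b / 3 := by
        refine add_le_add (add_le_add hδε' ?_) ?_
        · exact hN1 n (le_trans (le_max_left _ _) hn)
        · exact hN2 n (le_trans (le_max_right _ _) hn)
    _ = b := ENNReal.add_thirds b
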